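/- arXiv:0809.0746 — 10 statements merged into one kernel-verified Lean document; each statement's English description precedes it below -/
import Mathlib

section
/- If a compact metric space X admits a uniformly bounded L^1-embedding with |i(x)(ω)| ≤ K for all x ∈ X and ω ∈ Ω, then M(X) ≤ K, i.e., for all n ∈ ℕ, all reals α₁,…,αₙ with Σαᵢ = 1 and all x₁,…,xₙ ∈ X, one has Σᵢⱼ αᵢαⱼ d(xᵢ,xⱼ) ≤ K. -/
set_option maxHeartbeats 1000000


open MeasureTheory

private lemma expand_sum_aux (n : ℕ) (α b : Fin n → ℝ) :
    ∑ k, ∑ l, α k * α l * (b k + b l - 2 * (b k * b l))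
      = (∑ k, α k * b k) * (∑ k, α k) + (∑ k, α k) * (∑ k, α k * b k)
        - 2 * ((∑ k, α k * b k) * (∑ k, α k * b k)) := by
  simp only [Finset.sum_mul, Finset.mul_sum, ← Finset.sum_sub_distrib,
    ← Finset.sum_add_distrib]
  apply Finset.sum_congr rfl
  intro k _
  apply Finset.sum_congr rfl
  intro l _
  ring

private lemma key_finite (n : ℕ) (α : Fin n → ℝ) (hα : ∑ k, α k = 1)
    (a : Fin n → ℝ) (K : ℝ) (hK0 : 0 ≤ K) (ha : ∀ k, |a k| ≤ K) :
    ∑ k, ∑ l, α k * α l * |a k - a l| ≤ K := by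
  set g : Fin n → ℝ → ℝ := fun k t => Set.indicator {x | x ≤ a k} (fun _ => (1 : ℝ)) t
    with hg
  have hgif : ∀ k t, g k t = if t ≤ a k then 1 else 0 := by
    intro k t
    simp [hg, Set.indicator_apply]
  have hgint : ∀ k, IntervalIntegrable (g k) volume (-K) K := by
    intro k
    apply MeasureTheory.IntegrableOn.intervalIntegrable
    apply MeasureTheory.Integrable.indicator
    · exact integrableOn_const (by simp [Set.uIcc_eq_union])
    · exact measurableSet_Iic
  have hgval : ∀ k, ∫ t in (-K)..K, g k t = a k + K := by
    intro k
    have hmem : a k ∈ Set.Icc (-K) K := abs_le.1 (ha k)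
    rw [hg]
    rw [intervalIntegral.integral_indicator hmem]
    simp [sub_neg_eq_add]
  have hpair0 : ∀ k l, a k ≤ a l → |a k - a l| = ∫ t in (-K)..K, |g k t - g l t| := by
    intro k l hkl
    have heq : ∀ t, |g k t - g l t| = g l t - g k t := by
      intro t
      rw [hgif, hgif]
      split_ifs with h1 h2 h2 <;> simp_all <;> linarith
    calc |a k - a l| = a l - a k := by rw [abs_sub_comm]; exact abs_of_nonneg (by linarith)
      _ = (∫ t in (-K)..K, g l t) - ∫ t in (-K)..K, g k t := by
          rw [hgval, hgval]; ring
      _ = ∫ t in (-K)..K, (g l t - g k t) := by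
          rw [intervalIntegral.integral_sub (hgint l) (hgint k)]
      _ = ∫ t in (-K)..K, |g k t - g l t| := by
          exact (intervalIntegral.integral_congr fun t _ => heq t).symm
  have hpair : ∀ k l, |a k - a l| = ∫ t in (-K)..K, |g k t - g l t| := by
    intro k l
    rcases le_total (a k) (a l) with h | h
    · exact hpair0 k l h
    · rw [abs_sub_comm, hpair0 l k h]
      apply intervalIntegral.integral_congr
      intro t _
      exact abs_sub_comm (g l t) (g k t)
  have habsint : ∀ k l, IntervalIntegrable (fun t => |g k t - g l t|) volume (-K) K :=
    fun k l => ((hgint k).sub (hgint l)).abs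
  have hterm : ∀ k l, IntervalIntegrable (fun t => α k * α l * |g k t - g l t|)
      volume (-K) K := fun k l => (habsint k l).const_mul _
  have hFk : ∀ k, IntervalIntegrable (fun t => ∑ l, α k * α l * |g k t - g l t|)
      volume (-K) K := by
    intro k
    have h := IntervalIntegrable.sum (μ := volume) (a := -K) (b := K) Finset.univ
      (f := fun l t => α k * α l * |g k t - g l t|) (fun l _ => hterm k l)
    have e : (fun t => ∑ l, α k * α l * |g k t - g l t|)
        = ∑ l, fun t => α k * α l * |g k t - g l t| := by
      funext t; simp
    rw [e]; exact h
  have hF : IntervalIntegrable (fun t => ∑ k, ∑ l, α k * α l * |g k t - g l t|)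
      volume (-K) K := by
    have h := IntervalIntegrable.sum (μ := volume) (a := -K) (b := K) Finset.univ
      (f := fun k t => ∑ l, α k * α l * |g k t - g l t|) (fun k _ => hFk k)
    have e : (fun t => ∑ k, ∑ l, α k * α l * |g k t - g l t|)
        = ∑ k, fun t => ∑ l, α k * α l * |g k t - g l t| := by
      funext t; simp
    rw [e]; exact h
  have hswap : ∑ k, ∑ l, α k * α l * |a k - a l|
      = ∫ t in (-K)..K, ∑ k, ∑ l, α k * α l * |g k t - g l t| := by
    rw [intervalIntegral.integral_finset_sum fun k _ => hFk k]
    apply Finset.sum_congr rfl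
    intro k _
    rw [intervalIntegral.integral_finset_sum fun l _ => hterm k l]
    apply Finset.sum_congr rfl
    intro l _
    rw [hpair k l, intervalIntegral.integral_const_mul]
  rw [hswap]
  have hbound : ∀ t ∈ Set.Icc (-K) K,
      (∑ k, ∑ l, α k * α l * |g k t - g l t|) ≤ (1 : ℝ) / 2 := by
    intro t _
    have h01 : ∀ k, g k t = 0 ∨ g k t = 1 := by
      intro k; rw [hgif]; split_ifs <;> simp
    have habs : ∀ k l, |g k t - g l t| = g k t + g l t - 2 * (g k t * g l t) := by
      intro k l
      rcases h01 k with h | h <;> rcases h01 l with h' | h' <;>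
        rw [h, h'] <;> norm_num
    have : ∑ k, ∑ l, α k * α l * |g k t - g l t|
        = ∑ k, ∑ l, α k * α l * (g k t + g l t - 2 * (g k t * g l t)) := by
      apply Finset.sum_congr rfl; intro k _
      apply Finset.sum_congr rfl; intro l _
      rw [habs]
    rw [this, expand_sum_aux n α (fun k => g k t), hα]
    set S := ∑ k, α k * g k t
    nlinarith [sq_nonneg (2 * S - 1)]
  calc (∫ t in (-K)..K, ∑ k, ∑ l, α k * α l * |g k t - g l t|)
      ≤ ∫ _t in (-K)..K, (1 : ℝ) / 2 :=
        intervalIntegral.integral_mono_on (by linarith) hF intervalIntegrable_const hbound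
    _ = K := by
        rw [intervalIntegral.integral_const]
        simp [sub_neg_eq_add]
        ring

theorem bounded_l1_embedding_implies_M_le
    {X : Type*} [MetricSpace X] [CompactSpace X]
    {Ω : Type*} [MeasurableSpace Ω] (P : Measure Ω) [IsProbabilityMeasure P]
    (i : X → Ω → ℝ)
    (hint : ∀ x : X, Integrable (i x) P)
    (hiso : ∀ x y : X, dist x y = ∫ ω, |i x ω - i y ω| ∂P)
    (K : ℝ) (hK : ∀ (x : X) (ω : Ω), |i x ω| ≤ K) :
    ∀ (n : ℕ) (α : Fin n → ℝ), (∑ k, α k) = 1 →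
      ∀ x : Fin n → X,
        ∑ k, ∑ l, α k * α l * dist (x k) (x l) ≤ K := by
  intro n α hα x
  rcases Nat.eq_zero_or_pos n with rfl | hn
  · simp at hα
  have hΩ : Nonempty Ω := MeasureTheory.Measure.nonempty_of_neZero P
  obtain ⟨ω0⟩ := hΩ
  have hK0 : 0 ≤ K := (abs_nonneg _).trans (hK (x ⟨0, hn⟩) ω0)
  have hterm : ∀ k l : Fin n,
      Integrable (fun ω => α k * α l * |i (x k) ω - i (x l) ω|) P :=
    fun k l => (((hint (x k)).sub (hint (x l))).abs).const_mul _
  have hswap : ∑ k, ∑ l, α k * α l * dist (x k) (x l)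
      = ∫ ω, ∑ k, ∑ l, α k * α l * |i (x k) ω - i (x l) ω| ∂P := by
    rw [integral_finset_sum _ fun k _ => integrable_finset_sum _ fun l _ => hterm k l]
    apply Finset.sum_congr rfl
    intro k _
    rw [integral_finset_sum _ fun l _ => hterm k l]
    apply Finset.sum_congr rfl
    intro l _
    rw [hiso (x k) (x l), integral_const_mul]
  rw [hswap]
  calc (∫ ω, ∑ k, ∑ l, α k * α l * |i (x k) ω - i (x l) ω| ∂P)
      ≤ ∫ _ω, K ∂P := by
        apply integral_mono
        · exact integrable_finset_sum _ fun k _ => integrable_finset_sum _ fun l _ => hterm k l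
        · exact integrable_const K
        · intro ω
          exact key_finite n α hα (fun k => i (x k) ω) K hK0 (fun k => hK (x k) ω)
    _ = K := by simp
end

section
/- For the closed interval [−K, K] in ℝ, any reals x₁,…,xₙ ∈ [−K,K] and weights α₁,…,αₙ with Σαᵢ = 1 satisfy Σᵢⱼ αᵢαⱼ |xᵢ − xⱼ| ≤ K. -/
open MeasureTheory intervalIntegral Set

set_option maxHeartbeats 1000000 in
theorem interval_M_bound (K : ℝ) (n : ℕ) (x : Fin n → ℝ)
    (hx : ∀ k, x k ∈ Set.Icc (-K) K)
    (α : Fin n → ℝ) (hα : (∑ k, α k) = 1) :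
    ∑ k, ∑ l, α k * α l * |x k - x l| ≤ K := by
  classical
  rcases Nat.eq_zero_or_pos n with hn | hn
  · subst hn; simp at hα
  have hK0 : -K ≤ K := by
    have h := hx ⟨0, hn⟩
    have := h.1; have := h.2; linarith
  set f : ℝ → ℝ → ℝ := fun a t => if a ≤ t then 1 else 0 with hfdef
  have hmono : ∀ a, Monotone (f a) := by
    intro a s t hst
    simp only [f]
    split_ifs with h1 h2 <;> norm_num
    exact absurd (h1.trans hst) h2
  have hint : ∀ a, IntervalIntegrable (f a) volume (-K) K :=
    fun a => (hmono a).intervalIntegrable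
  -- value of the basic integral
  have hI : ∀ a ∈ Set.Icc (-K) K, (∫ t in (-K)..K, f a t) = K - a := by
    intro a ha
    have hne : ∀ᵐ (t : ℝ) ∂volume, t ≠ a := by
      rw [MeasureTheory.ae_iff]
      have hset : {t : ℝ | ¬ t ≠ a} = {a} := by ext t; simp
      rw [hset]; exact measure_singleton a
    have h2 : (∫ t in a..K, f a t) = K - a := by
      rw [integral_congr (g := fun _ => (1:ℝ)) ?_, intervalIntegral.integral_const]
      · simp
      · intro t ht
        have : a ≤ t := by
          rw [Set.uIcc_of_le ha.2] at ht
          exact ht.1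
        simp [f, this]
    have h1 : (∫ t in (-K)..a, f a t) = 0 := by
      rw [intervalIntegral.integral_congr_ae (g := fun _ => (0:ℝ)) ?_, intervalIntegral.integral_const]
      · simp
      · filter_upwards [hne] with t htne ht
        have : ¬ a ≤ t := by
          rw [Set.uIoc_of_le ha.1] at ht
          exact fun h => htne (le_antisymm ht.2 h)
        simp [f, this]
    have := integral_add_adjacent_intervals
      ((hmono a).intervalIntegrable (μ := volume) (a := -K) (b := a))
      ((hmono a).intervalIntegrable (μ := volume) (a := a) (b := K))
    rw [h1, h2, zero_add] at this
    exact this.symm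
  -- product of step functions is a step function
  have hprod : ∀ k l : Fin n, ∀ t : ℝ, f (x k) t * f (x l) t = f (max (x k) (x l)) t := by
    intro k l t
    simp only [f, max_le_iff]
    split_ifs with h1 h2 h3 h3 <;> norm_num <;> tauto
  -- the pair integrand and its integrability
  set g : Fin n → Fin n → ℝ → ℝ :=
    fun k l t => f (x k) t + f (x l) t - 2 * (f (x k) t * f (x l) t) with hgdef
  have hgmax : ∀ k l : Fin n, g k l = fun t => f (x k) t + f (x l) t - 2 * f (max (x k) (x l)) t := by
    intro k l; funext t; simp only [g]; rw [hprod k l t]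
  have hgint : ∀ k l : Fin n, IntervalIntegrable (g k l) volume (-K) K := by
    intro k l
    rw [hgmax k l]
    exact ((hint _).add (hint _)).sub ((hint _).const_mul 2)
  -- pair integral equals |x k - x l|
  have pair : ∀ k l : Fin n, (∫ t in (-K)..K, g k l t) = |x k - x l| := by
    intro k l
    have hml : max (x k) (x l) ∈ Set.Icc (-K) K := by
      rcases le_total (x k) (x l) with h | h
      · rw [max_eq_right h]; exact hx l
      · rw [max_eq_left h]; exact hx k
    rw [hgmax k l, integral_sub ((hint _).add (hint _)) ((hint _).const_mul 2),
      integral_add (hint _) (hint _), intervalIntegral.integral_const_mul,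
      hI _ (hx k), hI _ (hx l), hI _ hml]
    rcases le_total (x k) (x l) with h | h
    · rw [max_eq_right h, abs_of_nonpos (by linarith)]; ring
    · rw [max_eq_left h, abs_of_nonneg (by linarith)]; ring
  -- F and the pointwise identity
  set F : ℝ → ℝ := fun t => ∑ k, α k * f (x k) t with hFdef
  have key : ∀ t : ℝ, (∑ k, ∑ l, α k * α l * g k l t) = 2 * F t - 2 * F t ^ 2 := by
    intro t
    have inner : ∀ k : Fin n, (∑ l, α l * g k l t)
        = f (x k) t + F t - 2 * f (x k) t * F t := by
      intro k
      have hterm : ∀ l : Fin n, α l * g k l t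
          = f (x k) t * α l + α l * f (x l) t - 2 * f (x k) t * (α l * f (x l) t) := by
        intro l; simp only [g]; ring
      rw [Finset.sum_congr rfl fun l _ => hterm l]
      rw [Finset.sum_sub_distrib, Finset.sum_add_distrib, ← Finset.mul_sum, ← Finset.mul_sum, hα,
        mul_one]
    have houter : ∀ k : Fin n, (∑ l, α k * α l * g k l t) = α k * (∑ l, α l * g k l t) := by
      intro k
      rw [Finset.mul_sum]
      exact Finset.sum_congr rfl fun l _ => by ring
    rw [Finset.sum_congr rfl fun k _ => (houter k).trans (by rw [inner k])]
    have hterm2 : ∀ k : Fin n, α k * (f (x k) t + F t - 2 * f (x k) t * F t)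
        = α k * f (x k) t + F t * α k - 2 * F t * (α k * f (x k) t) := by
      intro k; ring
    rw [Finset.sum_congr rfl fun k _ => hterm2 k]
    rw [Finset.sum_sub_distrib, Finset.sum_add_distrib, ← Finset.mul_sum, ← Finset.mul_sum, hα,
      mul_one]
    simp only [F]
    ring
  -- main computation
  calc ∑ k, ∑ l, α k * α l * |x k - x l|
      = ∑ k, ∑ l, ∫ t in (-K)..K, α k * α l * g k l t := by
        refine Finset.sum_congr rfl fun k _ => Finset.sum_congr rfl fun l _ => ?_
        rw [intervalIntegral.integral_const_mul, pair k l]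
    _ = ∫ t in (-K)..K, ∑ k, ∑ l, α k * α l * g k l t := by
        have hrow : ∀ k : Fin n, IntervalIntegrable
            (fun t => ∑ l, α k * α l * g k l t) volume (-K) K := by
          intro k
          have := IntervalIntegrable.sum (μ := volume) (a := -K) (b := K) Finset.univ
            (f := fun l t => α k * α l * g k l t) (fun l _ => (hgint k l).const_mul _)
          have heq : (∑ l : Fin n, fun t => α k * α l * g k l t)
              = fun t => ∑ l, α k * α l * g k l t := by
            funext t; simp
          exact heq ▸ this
        rw [integral_finset_sum (fun k _ => hrow k)]
        exact Finset.sum_congr rfl fun k _ =>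
          (integral_finset_sum (fun l _ => (hgint k l).const_mul _)).symm
    _ ≤ ∫ t in (-K)..K, (1:ℝ)/2 := by
        have hall : IntervalIntegrable
            (fun t => ∑ k, ∑ l, α k * α l * g k l t) volume (-K) K := by
          have := IntervalIntegrable.sum (μ := volume) (a := -K) (b := K) Finset.univ
            (f := fun k t => ∑ l, α k * α l * g k l t) (fun k _ => by
              have := IntervalIntegrable.sum (μ := volume) (a := -K) (b := K) Finset.univ
                (f := fun l t => α k * α l * g k l t) (fun l _ => (hgint k l).const_mul _)
              have heq : (∑ l : Fin n, fun t => α k * α l * g k l t)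
                  = fun t => ∑ l, α k * α l * g k l t := by
                funext t; simp
              show IntervalIntegrable (fun t => ∑ l, α k * α l * g k l t) volume (-K) K
              exact heq ▸ this)
          have heq2 : (∑ k : Fin n, fun t => ∑ l, α k * α l * g k l t)
              = fun t => ∑ k, ∑ l, α k * α l * g k l t := by
            funext t; simp
          exact heq2 ▸ this
        apply integral_mono_on hK0 hall intervalIntegrable_const
        · intro t _
          rw [key t]
          nlinarith [sq_nonneg (F t - 1/2)]
    _ = K := by
        rw [intervalIntegral.integral_const]
        simp only [smul_eq_mul]
        ring
end

section
/- Let X = {x₁,…,xₙ} be a finite metric space S-embedded on a sphere of radius r in a euclidean space, i.e., there are points y₁,…,yₙ with ‖yᵢ − yⱼ‖² = d(xᵢ,xⱼ) and all yᵢ at distance r from a common center. Then M(X) ≤ 2r²: for all real weights wᵢ with Σwᵢ = 1, Σᵢⱼ wᵢwⱼ d(xᵢ,xⱼ) ≤ 2r². -/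
theorem s_embedding_on_sphere_M_le
    {X : Type*} [MetricSpace X] (n m : ℕ)
    (x : Fin n → X) (hx : Function.Bijective x)
    (y : Fin n → EuclideanSpace ℝ (Fin m))
    (c : EuclideanSpace ℝ (Fin m)) (r : ℝ)
    (hsphere : ∀ k, ‖y k - c‖ = r)
    (hemb : ∀ k l, ‖y k - y l‖ ^ 2 = dist (x k) (x l)) :
    ∀ w : Fin n → ℝ, (∑ k, w k) = 1 →
      ∑ k, ∑ l, w k * w l * dist (x k) (x l) ≤ 2 * r ^ 2 := by
  intro w hw
  set z : Fin n → EuclideanSpace ℝ (Fin m) := fun k => y k - c with hz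
  have hd : ∀ k l, dist (x k) (x l) = 2 * r ^ 2 - 2 * inner ℝ (z k) (z l) := by
    intro k l
    rw [← hemb k l]
    have hzz : y k - y l = z k - z l := by simp [hz]
    rw [hzz, ← real_inner_self_eq_norm_sq, inner_sub_sub_self,
      real_inner_self_eq_norm_sq, real_inner_self_eq_norm_sq,
      hsphere k, hsphere l, real_inner_comm (z l) (z k)]
    ring
  have hnorm : ‖∑ k, w k • z k‖ ^ 2
      = ∑ k, ∑ l, w k * w l * inner ℝ (z k) (z l) := by
    rw [← real_inner_self_eq_norm_sq, sum_inner]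
    refine Finset.sum_congr rfl fun k _ => ?_
    rw [inner_sum]
    refine Finset.sum_congr rfl fun l _ => ?_
    rw [real_inner_smul_left, real_inner_smul_right]
    ring
  have e1 : ∑ k, ∑ l, w k * w l * dist (x k) (x l)
      = (∑ k, ∑ l, w k * w l) * (2 * r ^ 2)
        - 2 * ∑ k, ∑ l, w k * w l * inner ℝ (z k) (z l) := by
    rw [Finset.sum_mul, Finset.mul_sum, ← Finset.sum_sub_distrib]
    refine Finset.sum_congr rfl fun k _ => ?_
    rw [Finset.sum_mul, Finset.mul_sum, ← Finset.sum_sub_distrib]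
    refine Finset.sum_congr rfl fun l _ => ?_
    rw [hd]; ring
  have e2 : (∑ k, ∑ l, w k * w l) = 1 := by
    simp only [← Finset.mul_sum, hw, mul_one]
  rw [e1, e2, ← hnorm]
  nlinarith [sq_nonneg ‖∑ k, w k • z k‖]
end

section
/- Let X = {x₁,…,xₙ} be a finite metric space S-embedded as points y₁,…,yₙ on a sphere of radius r centered at the origin in ℝ^m, and suppose the affine hull of {y₁,…,yₙ} is all of ℝ^m. Then M(X) = 2r², i.e., sup over weights wᵢ summing to 1 of Σᵢⱼ wᵢwⱼ d(xᵢ,xⱼ) equals 2r². -/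
open Finset

theorem s_embedding_minimal_dim_M_eq
    {X : Type*} [MetricSpace X] (n m : ℕ)
    (x : Fin n → X) (hx : Function.Bijective x)
    (y : Fin n → EuclideanSpace ℝ (Fin m))
    (r : ℝ) (hsphere : ∀ k, ‖y k‖ = r)
    (hemb : ∀ k l, ‖y k - y l‖ ^ 2 = dist (x k) (x l))
    (hspan : affineSpan ℝ (Set.range y) = ⊤) :
    IsLUB {s : ℝ | ∃ w : Fin n → ℝ, (∑ k, w k) = 1 ∧
        s = ∑ k, ∑ l, w k * w l * dist (x k) (x l)} (2 * r ^ 2) := by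
  have hd : ∀ k l, dist (x k) (x l)
      = ‖y k‖ ^ 2 + ‖y l‖ ^ 2 - 2 * (inner ℝ (y k) (y l) : ℝ) := by
    intro k l
    rw [← hemb k l, ← real_inner_self_eq_norm_sq, ← real_inner_self_eq_norm_sq,
      ← real_inner_self_eq_norm_sq]
    simp [inner_sub_left, inner_sub_right, real_inner_comm (y k) (y l)]
    rw [norm_sub_sq_real]; ring
  have key : ∀ w : Fin n → ℝ, (∑ k, w k) = 1 →
      (∑ k, ∑ l, w k * w l * dist (x k) (x l))
        = 2 * r ^ 2 - 2 * ‖∑ k, w k • y k‖ ^ 2 := by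
    intro w hw
    have h1 : (‖∑ k, w k • y k‖ : ℝ) ^ 2
        = ∑ k, ∑ l, w k * w l * (inner ℝ (y k) (y l) : ℝ) := by
      rw [← real_inner_self_eq_norm_sq, sum_inner]
      refine Finset.sum_congr rfl fun k _ => ?_
      rw [real_inner_smul_left, inner_sum, Finset.mul_sum]
      refine Finset.sum_congr rfl fun l _ => ?_
      rw [real_inner_smul_right]; ring
    have h2 : (∑ k, ∑ l, w k * w l * dist (x k) (x l))
        = ∑ k, ∑ l, (w k * w l * (2 * r ^ 2)
            - 2 * (w k * w l * (inner ℝ (y k) (y l) : ℝ))) := by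
      refine Finset.sum_congr rfl fun k _ => Finset.sum_congr rfl fun l _ => ?_
      rw [hd k l, hsphere k, hsphere l]; ring
    have h3 : (∑ k, ∑ l, w k * w l) = 1 := by
      rw [← Finset.sum_mul_sum, hw]; norm_num
    rw [h2, h1]
    simp only [Finset.sum_sub_distrib, ← Finset.sum_mul, ← Finset.mul_sum]
    rw [hw]; ring
  constructor
  · rintro s ⟨w, hw, rfl⟩
    rw [key w hw]
    have := sq_nonneg ‖∑ k, w k • y k‖
    linarith
  · intro b hb
    have h0 : (0 : EuclideanSpace ℝ (Fin m)) ∈ affineSpan ℝ (Set.range y) := by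
      rw [hspan]; trivial
    obtain ⟨w, hw, hcomb⟩ := eq_affineCombination_of_mem_affineSpan_of_fintype h0
    have hz : (∑ k, w k • y k) = 0 := by
      rw [← Finset.univ.affineCombination_eq_linear_combination y w hw, ← hcomb]
    refine hb ⟨w, hw, ?_⟩
    rw [key w hw, hz]
    simp
end

section
/- Let X = {x₁,…,xₙ} be S-embedded as points y₁,…,yₙ on a sphere of radius r centered at the origin in ℝ^m with affine hull equal to ℝ^m. Then M⁺(X) = 2(r² − s²), where s = inf{ ‖Σᵢ wᵢyᵢ‖ : wᵢ ≥ 0, Σwᵢ = 1 } is the distance from the origin to the convex hull of the yᵢ. -/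
theorem s_embedding_minimal_dim_Mplus_eq
    {X : Type*} [MetricSpace X] (n m : ℕ)
    (x : Fin n → X) (hx : Function.Bijective x)
    (y : Fin n → EuclideanSpace ℝ (Fin m))
    (r : ℝ) (hsphere : ∀ k, ‖y k‖ = r)
    (hemb : ∀ k l, ‖y k - y l‖ ^ 2 = dist (x k) (x l))
    (hspan : affineSpan ℝ (Set.range y) = ⊤)
    (s : ℝ)
    (hs : IsGLB {t : ℝ | ∃ w : Fin n → ℝ, (∀ k, 0 ≤ w k) ∧ (∑ k, w k) = 1 ∧
        t = ‖∑ k, w k • y k‖} s) :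
    IsLUB {t : ℝ | ∃ w : Fin n → ℝ, (∀ k, 0 ≤ w k) ∧ (∑ k, w k) = 1 ∧
        t = ∑ k, ∑ l, w k * w l * dist (x k) (x l)} (2 * (r ^ 2 - s ^ 2)) := by
  have key : ∀ w : Fin n → ℝ, (∑ k, w k) = 1 →
      (∑ k, ∑ l, w k * w l * dist (x k) (x l)) = 2 * (r ^ 2 - ‖∑ k, w k • y k‖ ^ 2) := by
    intro w hw
    have h1 : ∀ k l, w k * w l * dist (x k) (x l)
        = 2 * r ^ 2 * (w k * w l) - 2 * (w k * w l * (inner ℝ (y k) (y l) : ℝ)) := by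
      intro k l
      rw [← hemb k l, @norm_sub_sq_real, hsphere, hsphere]; ring
    simp only [h1, Finset.sum_sub_distrib]
    have h2 : (∑ k, ∑ l, 2 * r ^ 2 * (w k * w l)) = 2 * r ^ 2 := by
      simp only [← Finset.mul_sum, ← Finset.sum_mul, hw]; ring
    have h3 : ‖∑ k, w k • y k‖ ^ 2 = ∑ k, ∑ l, w k * w l * (inner ℝ (y k) (y l) : ℝ) := by
      rw [← real_inner_self_eq_norm_sq, sum_inner]
      refine Finset.sum_congr rfl fun k _ => ?_
      rw [inner_sum]
      refine Finset.sum_congr rfl fun l _ => ?_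
      rw [real_inner_smul_left, real_inner_smul_right]; ring
    rw [h2, h3]
    simp only [← Finset.mul_sum]
    ring
  have hs0 : 0 ≤ s := hs.2 (by rintro t ⟨w, hw0, hw1, rfl⟩; exact norm_nonneg _)
  constructor
  · rintro t ⟨w, hw0, hw1, rfl⟩
    rw [key w hw1]
    have hsu : s ≤ ‖∑ k, w k • y k‖ := hs.1 ⟨w, hw0, hw1, rfl⟩
    nlinarith [norm_nonneg (∑ k, w k • y k)]
  · intro b hb
    set c := Real.sqrt (max 0 (r ^ 2 - b / 2)) with hc
    have hcl : c ∈ lowerBounds {t : ℝ | ∃ w : Fin n → ℝ, (∀ k, 0 ≤ w k) ∧ (∑ k, w k) = 1 ∧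
        t = ‖∑ k, w k • y k‖} := by
      rintro t ⟨w, hw0, hw1, rfl⟩
      have hle : (∑ k, ∑ l, w k * w l * dist (x k) (x l)) ≤ b := hb ⟨w, hw0, hw1, rfl⟩
      rw [key w hw1] at hle
      have h1 : max 0 (r ^ 2 - b / 2) ≤ ‖∑ k, w k • y k‖ ^ 2 :=
        max_le (sq_nonneg _) (by linarith)
      calc c ≤ Real.sqrt (‖∑ k, w k • y k‖ ^ 2) := Real.sqrt_le_sqrt h1
        _ = ‖∑ k, w k • y k‖ := Real.sqrt_sq (norm_nonneg _)
    have hcs : c ≤ s := hs.2 hcl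
    have hc0 : 0 ≤ c := Real.sqrt_nonneg _
    have hc2 : c ^ 2 = max 0 (r ^ 2 - b / 2) := Real.sq_sqrt (le_max_left _ _)
    nlinarith [le_max_right 0 (r ^ 2 - b / 2)]
end

section
/- Let X = {x₁,…,xₙ} be S-embedded as y₁,…,yₙ on a sphere of radius r centered at the origin in ℝ^m with affine hull equal to ℝ^m. Then for real weights wᵢ with Σwᵢ = 1, the quadratic form Σᵢⱼ wᵢwⱼ d(xᵢ,xⱼ) attains its maximum value M(X) = 2r² if and only if Σᵢ wᵢyᵢ = 0 (the center of the sphere). -/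
theorem s_embedding_maximal_iff_center
    {X : Type*} [MetricSpace X] (n m : ℕ)
    (x : Fin n → X) (hx : Function.Bijective x)
    (y : Fin n → EuclideanSpace ℝ (Fin m))
    (r : ℝ) (hsphere : ∀ k, ‖y k‖ = r)
    (hemb : ∀ k l, ‖y k - y l‖ ^ 2 = dist (x k) (x l))
    (hspan : affineSpan ℝ (Set.range y) = ⊤)
    (w : Fin n → ℝ) (hw : (∑ k, w k) = 1) :
    (∑ k, ∑ l, w k * w l * dist (x k) (x l)) = 2 * r ^ 2 ↔
      (∑ k, w k • y k) = 0 := by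
  set s := ∑ k, w k • y k with hs
  have hinner : (inner ℝ s s : ℝ) = ∑ k, ∑ l, w k * w l * inner ℝ (y k) (y l) := by
    rw [hs, sum_inner]
    refine Finset.sum_congr rfl fun k _ => ?_
    rw [inner_sum]
    refine Finset.sum_congr rfl fun l _ => ?_
    rw [real_inner_smul_left, real_inner_smul_right]
    ring
  have hterm : ∀ k l, w k * w l * dist (x k) (x l)
      = 2 * r ^ 2 * (w k * w l) - 2 * (w k * w l * inner ℝ (y k) (y l)) := by
    intro k l
    rw [← hemb k l, @norm_sub_sq_real]
    have hk := hsphere k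
    have hl := hsphere l
    rw [hk, hl]; ring
  have hA : ∑ k, ∑ l, 2 * r ^ 2 * (w k * w l) = 2 * r ^ 2 := by
    calc ∑ k, ∑ l, 2 * r ^ 2 * (w k * w l)
        = 2 * r ^ 2 * ∑ k, ∑ l, w k * w l := by
          rw [Finset.mul_sum]
          exact Finset.sum_congr rfl fun k _ => by rw [Finset.mul_sum]
      _ = 2 * r ^ 2 * ((∑ k, w k) * (∑ l, w l)) := by rw [Finset.sum_mul_sum]
      _ = 2 * r ^ 2 := by rw [hw]; ring
  have key : (∑ k, ∑ l, w k * w l * dist (x k) (x l))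
      = 2 * r ^ 2 - 2 * inner ℝ s s := by
    simp_rw [hterm]
    rw [show (∑ k, ∑ l, (2 * r ^ 2 * (w k * w l) - 2 * (w k * w l * inner ℝ (y k) (y l)))) =
      (∑ k, ∑ l, 2 * r ^ 2 * (w k * w l)) - 2 * ∑ k, ∑ l, w k * w l * (inner ℝ (y k) (y l) : ℝ) by
        rw [Finset.mul_sum, ← Finset.sum_sub_distrib]
        refine Finset.sum_congr rfl fun k _ => ?_
        rw [Finset.mul_sum, ← Finset.sum_sub_distrib]]
    rw [hA, hinner]
  rw [key]
  constructor
  · intro h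
    have h0 : (inner ℝ s s : ℝ) = 0 := by linarith
    exact inner_self_eq_zero.mp h0
  · intro h
    rw [h]
    simp
end

section
/- Let (X,d) be a compact metric space with M(X) < ∞. Then there exists a map i of X into a (separable) Hilbert space such that ‖i(x)‖ = (M(X)/2)^{1/2} for all x ∈ X and ‖i(x) − i(y)‖² = d(x,y) for all x,y ∈ X. In particular, every such X admits an S-embedding onto a sphere of radius (M(X)/2)^{1/2}. -/
open MeasureTheory Function

namespace SEmb



variable {α : Type*} {f : α → ℕ}

theorem extend_norm_sq (hf : Injective f) (g : α → ℝ) :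
    (fun n => ‖Function.extend f g 0 n‖ ^ (2:ℝ)) = Function.extend f (fun a => ‖g a‖ ^ (2:ℝ)) 0 := by
  funext n
  by_cases h : ∃ a, f a = n
  · obtain ⟨a, rfl⟩ := h
    rw [hf.extend_apply, hf.extend_apply]
  · rw [Function.extend_apply' _ _ _ h, Function.extend_apply' _ _ _ h]
    simp

theorem summable_extend (hf : Injective f) {h : α → ℝ} (hh : Summable h) :
    Summable (Function.extend f h 0) := by
  rw [← hf.summable_iff (f := Function.extend f h 0)
    (fun x hx => Function.extend_apply' _ _ _ (by simpa [Set.range] using hx))]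
  convert hh using 1
  funext a
  exact hf.extend_apply _ _ _

theorem tsum_extend (hf : Injective f) (h : α → ℝ) :
    ∑' n, Function.extend f h 0 n = ∑' a, h a := by
  rw [← hf.tsum_eq (f := Function.extend f h 0)]
  · congr 1; funext a; exact hf.extend_apply _ _ _
  · intro x hx
    by_contra hc
    rw [Function.mem_support] at hx
    exact hx (Function.extend_apply' _ _ _ (fun he => hc (by simpa [Set.range] using he)))

theorem memℓp_extend (hf : Injective f) (g : lp (fun _ : α => ℝ) 2) :
    Memℓp (Function.extend f (⇑g) 0) 2 := by
  apply memℓp_gen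
  have h2 : (0:ℝ) < (2 : ENNReal).toReal := by norm_num
  have := (lp.memℓp g)
  rw [memℓp_gen_iff h2] at this
  simp only [ENNReal.toReal_ofNat] at this ⊢
  rw [extend_norm_sq hf]
  exact summable_extend hf this

noncomputable def lpExt (hf : Injective f) :
    lp (fun _ : α => ℝ) 2 →ₗᵢ[ℝ] lp (fun _ : ℕ => ℝ) 2 where
  toFun g := ⟨Function.extend f (⇑g) 0, memℓp_extend hf g⟩
  map_add' g₁ g₂ := by
    ext n
    show Function.extend f (⇑(g₁ + g₂)) 0 n = Function.extend f ⇑g₁ 0 n + Function.extend f ⇑g₂ 0 n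
    by_cases h : ∃ a, f a = n
    · obtain ⟨a, rfl⟩ := h
      rw [hf.extend_apply, hf.extend_apply, hf.extend_apply, lp.coeFn_add, Pi.add_apply]
    · rw [Function.extend_apply' _ _ _ h, Function.extend_apply' _ _ _ h,
        Function.extend_apply' _ _ _ h]
      simp
  map_smul' c g := by
    ext n
    show Function.extend f (⇑(c • g)) 0 n = c • Function.extend f ⇑g 0 n
    by_cases h : ∃ a, f a = n
    · obtain ⟨a, rfl⟩ := h
      rw [hf.extend_apply, hf.extend_apply, lp.coeFn_smul, Pi.smul_apply]
    · rw [Function.extend_apply' _ _ _ h, Function.extend_apply' _ _ _ h]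
      simp
  norm_map' g := by
    have h2 : (0:ℝ) < (2 : ENNReal).toReal := by norm_num
    rw [lp.norm_eq_tsum_rpow h2, lp.norm_eq_tsum_rpow h2]
    congr 1
    show (∑' n, ‖Function.extend f (⇑g) 0 n‖ ^ (2:ENNReal).toReal) = _
    simp only [ENNReal.toReal_ofNat]
    rw [extend_norm_sq hf, tsum_extend hf]



variable {X : Type*} (K : X → X → ℝ)

noncomputable def kinner (f g : X →₀ ℝ) : ℝ :=
  ∑ x ∈ f.support, ∑ y ∈ g.support, f x * g y * K x y

theorem kinner_eq (f g : X →₀ ℝ) (s t : Finset X) (hs : f.support ⊆ s) (ht : g.support ⊆ t) :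
    kinner K f g = ∑ x ∈ s, ∑ y ∈ t, f x * g y * K x y := by
  unfold kinner
  rw [Finset.sum_subset hs (fun x _ hx => ?_)]
  · refine Finset.sum_congr rfl fun x _ => ?_
    refine Finset.sum_subset ht fun y _ hy => ?_
    rw [Finsupp.notMem_support_iff.mp hy]
    ring
  · apply Finset.sum_eq_zero fun y _ => ?_
    rw [Finsupp.notMem_support_iff.mp hx]
    ring

theorem kinner_add_left (f₁ f₂ g : X →₀ ℝ) :
    kinner K (f₁ + f₂) g = kinner K f₁ g + kinner K f₂ g := by
  classical
  rw [kinner_eq K (f₁ + f₂) g (f₁.support ∪ f₂.support) g.support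
      (Finsupp.support_add) le_rfl,
    kinner_eq K f₁ g (f₁.support ∪ f₂.support) g.support Finset.subset_union_left le_rfl,
    kinner_eq K f₂ g (f₁.support ∪ f₂.support) g.support Finset.subset_union_right le_rfl,
    ← Finset.sum_add_distrib]
  refine Finset.sum_congr rfl fun x _ => ?_
  rw [← Finset.sum_add_distrib]
  refine Finset.sum_congr rfl fun y _ => ?_
  rw [Finsupp.add_apply]
  ring

theorem kinner_smul_left (r : ℝ) (f g : X →₀ ℝ) :
    kinner K (r • f) g = r * kinner K f g := by
  rw [kinner_eq K (r • f) g f.support g.support Finsupp.support_smul le_rfl, kinner,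
    Finset.mul_sum]
  refine Finset.sum_congr rfl fun x _ => ?_
  rw [Finset.mul_sum]
  refine Finset.sum_congr rfl fun y _ => ?_
  rw [Finsupp.smul_apply, smul_eq_mul]
  ring

theorem kinner_symm (hK : ∀ x y, K x y = K y x) (f g : X →₀ ℝ) :
    kinner K f g = kinner K g f := by
  unfold kinner
  rw [Finset.sum_comm]
  refine Finset.sum_congr rfl fun y _ => Finset.sum_congr rfl fun x _ => ?_
  rw [hK y x]
  ring

theorem kinner_single (x y : X) :
    kinner K (Finsupp.single x 1) (Finsupp.single y 1) = K x y := by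
  unfold kinner
  rw [Finsupp.support_single_ne_zero x one_ne_zero, Finsupp.support_single_ne_zero y one_ne_zero]
  simp

noncomputable def kcore (hK : ∀ x y, K x y = K y x)
    (hpsd : ∀ (s : Finset X) (c : X → ℝ), 0 ≤ ∑ x ∈ s, ∑ y ∈ s, c x * c y * K x y) :
    PreInnerProductSpace.Core ℝ (X →₀ ℝ) where
  inner := kinner K
  conj_inner_symm := fun f g => by
    simp only [starRingEnd_apply, star_trivial]
    exact kinner_symm K hK g f
  re_inner_nonneg := fun f => by
    simpa [kinner] using hpsd f.support ⇑f
  add_left := kinner_add_left K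
  smul_left := fun f g r => by
    simp only [starRingEnd_apply, star_trivial, smul_eq_mul]
    exact kinner_smul_left K r f g


theorem exists_embedding {X : Type*} [MetricSpace X] [TopologicalSpace.SeparableSpace X]
    (K : X → X → ℝ) (hK : ∀ x y, K x y = K y x)
    (hpsd : ∀ (s : Finset X) (c : X → ℝ), 0 ≤ ∑ x ∈ s, ∑ y ∈ s, c x * c y * K x y)
    (hdist : ∀ x y, K x x + K y y - 2 * K x y = dist x y) :
    ∃ i : X → lp (fun _ : ℕ => ℝ) 2,
      (∀ x, ‖i x‖ ^ 2 = K x x) ∧ (∀ x y, ‖i x - i y‖ ^ 2 = dist x y) := by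
  classical
  letI core : PreInnerProductSpace.Core ℝ (X →₀ ℝ) := kcore K hK hpsd
  letI : Inner ℝ (X →₀ ℝ) := core.toInner
  letI : SeminormedAddCommGroup (X →₀ ℝ) :=
    @InnerProductSpace.Core.toSeminormedAddCommGroup ℝ (X →₀ ℝ) _ _ _ core
  letI : NormedSpace ℝ (X →₀ ℝ) :=
    @InnerProductSpace.Core.toNormedSpace ℝ (X →₀ ℝ) _ _ _ core
  letI : InnerProductSpace ℝ (X →₀ ℝ) :=
    { core with
      norm_sq_eq_re_inner := fun f => by
        have h₁ : ‖f‖ ^ 2 = Real.sqrt (RCLike.re (core.inner f f)) ^ 2 := rfl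
        rw [h₁, Real.sq_sqrt (core.re_inner_nonneg f)] }
  set H := UniformSpace.Completion (X →₀ ℝ) with hH
  let j : X → H := fun x => ((Finsupp.single x 1 : X →₀ ℝ) : H)
  have inner_j : ∀ x y : X, (inner ℝ (j x) (j y) : ℝ) = K x y := by
    intro x y
    rw [UniformSpace.Completion.inner_coe]
    exact kinner_single K x y
  have norm_j_sq : ∀ x : X, ‖j x‖ ^ 2 = K x x := by
    intro x
    rw [← real_inner_self_eq_norm_sq, inner_j]
  have norm_j_sub_sq : ∀ x y : X, ‖j x - j y‖ ^ 2 = dist x y := by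
    intro x y
    rw [norm_sub_sq_real, norm_j_sq, norm_j_sq, inner_j, ← hdist x y]
    ring
  have cont_j : Continuous j := by
    rw [Metric.continuous_iff]
    intro x ε hε
    refine ⟨ε ^ 2, by positivity, fun y hy => ?_⟩
    have h1 : dist (j y) (j x) = Real.sqrt (dist y x) := by
      rw [dist_eq_norm, ← Real.sqrt_sq (norm_nonneg (j y - j x)), norm_j_sub_sq]
    rw [h1, ← Real.sqrt_sq hε.le]
    exact Real.sqrt_lt_sqrt dist_nonneg hy
  set Hsub : Submodule ℝ H := (Submodule.span ℝ (Set.range j)).topologicalClosure with hHsub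
  have mem_j : ∀ x, j x ∈ Hsub :=
    fun x => Submodule.le_topologicalClosure _ (Submodule.subset_span ⟨x, rfl⟩)
  let j' : X → Hsub := fun x => ⟨j x, mem_j x⟩
  haveI : CompleteSpace Hsub := (Submodule.isClosed_topologicalClosure _).completeSpace_coe
  haveI : TopologicalSpace.SeparableSpace Hsub := by
    have h1 : TopologicalSpace.IsSeparable (Set.range j) :=
      TopologicalSpace.isSeparable_range cont_j
    have h2 : TopologicalSpace.IsSeparable (Hsub : Set H) := by
      rw [hHsub, Submodule.topologicalClosure_coe]
      exact (h1.span).closure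
    exact h2.separableSpace
  obtain ⟨w, b, hb⟩ := exists_hilbertBasis ℝ Hsub
  have hortho : Orthonormal ℝ ((↑) : w → Hsub) := by
    rw [← hb]; exact b.orthonormal
  have hw : w.Countable := by
    refine Set.PairwiseDisjoint.countable_of_isOpen
      (s := fun v : Hsub => Metric.ball v (Real.sqrt 2 / 2)) ?_
      (fun v _ => Metric.isOpen_ball) (fun v _ => ⟨v, by simp [Real.sqrt_pos]⟩)
    intro u hu v hv huv
    refine Metric.ball_disjoint_ball ?_
    have hne : (⟨u, hu⟩ : w) ≠ ⟨v, hv⟩ := by simp [Subtype.ext_iff, huv]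
    have hiuv : (inner ℝ ((⟨u, hu⟩ : w) : Hsub) ((⟨v, hv⟩ : w) : Hsub) : ℝ) = 0 := hortho.2 hne
    have hu1 : ‖((⟨u, hu⟩ : w) : Hsub)‖ = 1 := hortho.1 ⟨u, hu⟩
    have hv1 : ‖((⟨v, hv⟩ : w) : Hsub)‖ = 1 := hortho.1 ⟨v, hv⟩
    have h2 : ‖u - v‖ ^ 2 = 2 := by
      rw [norm_sub_sq_real]
      rw [show ((⟨u, hu⟩ : w) : Hsub) = u from rfl] at hiuv hu1
      rw [show ((⟨v, hv⟩ : w) : Hsub) = v from rfl] at hiuv hv1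
      rw [hiuv, hu1, hv1]; ring
    have h3 : dist u v = Real.sqrt 2 := by
      rw [dist_eq_norm, ← Real.sqrt_sq (norm_nonneg (u - v)), h2]
    rw [h3]; linarith
  obtain ⟨fenc, hfenc⟩ := Set.countable_iff_exists_injective.mp hw
  let T := lpExt hfenc
  refine ⟨fun x => T (b.repr (j' x)), fun x => ?_, fun x y => ?_⟩
  · rw [T.norm_map, b.repr.norm_map]
    have : ‖j' x‖ = ‖j x‖ := rfl
    rw [this, norm_j_sq]
  · rw [← map_sub, ← map_sub, T.norm_map, b.repr.norm_map]
    have : ‖j' x - j' y‖ = ‖j x - j y‖ := rfl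
    rw [this, norm_j_sub_sq]

end SEmb


namespace SEmb2


variable {X : Type*} [MetricSpace X] [MeasurableSpace X] [BorelSpace X]

noncomputable def dm (s : Finset X) (c : X → ℝ) : Measure X :=
  ∑ x ∈ s, ENNReal.ofReal (c x) • Measure.dirac x

set_option linter.unusedSectionVars false

theorem dm_univ (s : Finset X) (c : X → ℝ) :
    dm s c Set.univ = ∑ x ∈ s, ENNReal.ofReal (c x) := by
  simp [dm, Measure.finset_sum_apply, Measure.smul_apply]

theorem dm_finite (s : Finset X) (c : X → ℝ) : IsFiniteMeasure (dm s c) := by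
  constructor
  rw [dm_univ]
  exact ENNReal.sum_lt_top.mpr fun x _ => ENNReal.ofReal_lt_top

theorem dm_univ_toReal (s : Finset X) (c : X → ℝ) (hc : ∀ x ∈ s, 0 ≤ c x) :
    (dm s c Set.univ).toReal = ∑ x ∈ s, c x := by
  rw [dm_univ, ENNReal.toReal_sum fun x _ => ENNReal.ofReal_ne_top]
  exact Finset.sum_congr rfl fun x hx => ENNReal.toReal_ofReal (hc x hx)

theorem integrable_dirac' (φ : X → ℝ) (hφ : Continuous φ) (x : X) :
    Integrable φ (Measure.dirac x) := by
  refine ⟨hφ.aestronglyMeasurable, ?_⟩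
  simp [HasFiniteIntegral, lintegral_dirac]

theorem integral_dm (s : Finset X) (c : X → ℝ) (hc : ∀ x ∈ s, 0 ≤ c x)
    (φ : X → ℝ) (hφ : Continuous φ) :
    ∫ a, φ a ∂(dm s c) = ∑ x ∈ s, c x * φ x := by
  rw [dm, integral_finset_sum_measure fun x _ =>
    (integrable_dirac' φ hφ x).smul_measure ENNReal.ofReal_ne_top]
  refine Finset.sum_congr rfl fun x hx => ?_
  rw [integral_smul_measure, integral_dirac, ENNReal.toReal_ofReal (hc x hx), smul_eq_mul]

theorem double_dm (s t : Finset X) (c c' : X → ℝ)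
    (hc : ∀ x ∈ s, 0 ≤ c x) (hc' : ∀ y ∈ t, 0 ≤ c' y) :
    ∫ a, ∫ b, dist a b ∂(dm t c') ∂(dm s c)
      = ∑ x ∈ s, ∑ y ∈ t, c x * c' y * dist x y := by
  have hinner : ∀ a : X, ∫ b, dist a b ∂(dm t c') = ∑ y ∈ t, c' y * dist a y := fun a =>
    integral_dm t c' hc' _ (continuous_const.dist continuous_id)
  have hcont : Continuous fun a => ∑ y ∈ t, c' y * dist a y :=
    continuous_finset_sum _ fun y _ => continuous_const.mul (continuous_id.dist continuous_const)
  calc ∫ a, ∫ b, dist a b ∂(dm t c') ∂(dm s c)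
      = ∫ a, (∑ y ∈ t, c' y * dist a y) ∂(dm s c) :=
        integral_congr_ae (Filter.Eventually.of_forall fun a => hinner a)
    _ = ∑ x ∈ s, c x * ∑ y ∈ t, c' y * dist x y := integral_dm s c hc _ hcont
    _ = ∑ x ∈ s, ∑ y ∈ t, c x * c' y * dist x y := by
        refine Finset.sum_congr rfl fun x _ => ?_
        rw [Finset.mul_sum]
        exact Finset.sum_congr rfl fun y _ => by ring

theorem energy_mem (S : Set ℝ)
    (hS : S = {r : ℝ | ∃ P N : Measure X, IsFiniteMeasure P ∧ IsFiniteMeasure N ∧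
      (P Set.univ).toReal - (N Set.univ).toReal = 1 ∧
      r = (∫ a, ∫ b, dist a b ∂P ∂P) + (∫ a, ∫ b, dist a b ∂N ∂N)
            - 2 * (∫ a, ∫ b, dist a b ∂N ∂P)})
    (s : Finset X) (c : X → ℝ) (hc : ∑ x ∈ s, c x = 1) :
    (∑ x ∈ s, ∑ y ∈ s, c x * c y * dist x y) ∈ S := by
  classical
  rw [hS]
  set cp : X → ℝ := fun x => max (c x) 0 with hcp
  set cn : X → ℝ := fun x => max (-c x) 0 with hcn
  have hcpn : ∀ x, cp x - cn x = c x := fun x => max_zero_sub_max_neg_zero_eq_self (c x)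
  have hcp0 : ∀ x ∈ s, 0 ≤ cp x := fun x _ => le_max_right _ _
  have hcn0 : ∀ x ∈ s, 0 ≤ cn x := fun x _ => le_max_right _ _
  refine ⟨dm s cp, dm s cn, dm_finite s cp, dm_finite s cn, ?_, ?_⟩
  · rw [dm_univ_toReal s cp hcp0, dm_univ_toReal s cn hcn0, ← Finset.sum_sub_distrib]
    rw [show ∑ x ∈ s, (cp x - cn x) = ∑ x ∈ s, c x from
      Finset.sum_congr rfl fun x _ => by rw [hcpn x]]
    exact hc
  · rw [double_dm s s cp cp hcp0 hcp0, double_dm s s cn cn hcn0 hcn0,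
      double_dm s s cp cn hcp0 hcn0]
    have key : ∀ x y : X, c x * c y * dist x y =
        cp x * cp y * dist x y + cn x * cn y * dist x y
          - (cp x * cn y * dist x y + cn x * cp y * dist x y) := by
      intro x y
      rw [← hcpn x, ← hcpn y]
      ring
    have hswap : ∑ x ∈ s, ∑ y ∈ s, cn x * cp y * dist x y
        = ∑ x ∈ s, ∑ y ∈ s, cp x * cn y * dist x y := by
      rw [Finset.sum_comm]
      exact Finset.sum_congr rfl fun x _ => Finset.sum_congr rfl fun y _ => by
        rw [dist_comm]; ring
    rw [Finset.sum_congr rfl fun x (_ : x ∈ s) => Finset.sum_congr rfl fun y (_ : y ∈ s) => key x y]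
    simp only [Finset.sum_add_distrib, Finset.sum_sub_distrib]
    rw [hswap]
    ring


theorem energy_le (S : Set ℝ)
    (hS : S = {r : ℝ | ∃ P N : Measure X, IsFiniteMeasure P ∧ IsFiniteMeasure N ∧
      (P Set.univ).toReal - (N Set.univ).toReal = 1 ∧
      r = (∫ a, ∫ b, dist a b ∂P ∂P) + (∫ a, ∫ b, dist a b ∂N ∂N)
            - 2 * (∫ a, ∫ b, dist a b ∂N ∂P)})
    (hfin : BddAbove S) [Nonempty X] (s : Finset X) (c : X → ℝ) :
    ∑ x ∈ s, ∑ y ∈ s, c x * c y * dist x y ≤ sSup S * (∑ x ∈ s, c x) ^ 2 := by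
  classical
  set t := ∑ x ∈ s, c x with ht
  by_cases h0 : t = 0
  · suffices hE : (∑ x ∈ s, ∑ y ∈ s, c x * c y * dist x y) ≤ 0 by
      rw [h0]
      calc ∑ x ∈ s, ∑ y ∈ s, c x * c y * dist x y ≤ 0 := hE
        _ = sSup S * (0:ℝ)^2 := by ring
    obtain ⟨x₀⟩ := ‹Nonempty X›
    obtain ⟨Bd, hBd⟩ := hfin
    rw [mem_upperBounds] at hBd
    set s' := insert x₀ s with hs'
    set c₀ : X → ℝ := fun x => if x ∈ s then c x else 0 with hc₀
    set δ : X → ℝ := fun x => if x = x₀ then 1 else 0 with hδ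
    have hQ : ∑ x ∈ s', ∑ y ∈ s', c₀ x * c₀ y * dist x y
        = ∑ x ∈ s, ∑ y ∈ s, c x * c y * dist x y := by
      rw [← Finset.sum_subset (Finset.subset_insert x₀ s)
        (fun x _ hx => Finset.sum_eq_zero fun y _ => by simp [hc₀, hx])]
      refine Finset.sum_congr rfl fun x hx => ?_
      rw [← Finset.sum_subset (Finset.subset_insert x₀ s)
        (fun y _ hy => by simp [hc₀, hy])]
      exact Finset.sum_congr rfl fun y hy => by simp [hc₀, hx, hy]
    have hc₀sum : ∑ x ∈ s', c₀ x = 0 := by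
      rw [← Finset.sum_subset (Finset.subset_insert x₀ s) (fun x _ hx => by simp [hc₀, hx])]
      rw [show ∑ x ∈ s, c₀ x = ∑ x ∈ s, c x from
        Finset.sum_congr rfl fun x hx => by simp [hc₀, hx]]
      exact h0
    have hδsum : ∑ x ∈ s', δ x = 1 := by
      rw [hδ]
      rw [Finset.sum_ite_eq' s' x₀ (fun _ => (1:ℝ))]
      simp [hs']
    set A := ∑ x ∈ s', ∑ y ∈ s', δ x * δ y * dist x y with hA'
    set B := ∑ x ∈ s', ∑ y ∈ s', (δ x * c₀ y + c₀ x * δ y) * dist x y with hB'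
    set Q := ∑ x ∈ s, ∑ y ∈ s, c x * c y * dist x y with hQ'
    have expand : ∀ lam : ℝ, A + lam * B + lam ^ 2 * Q ∈ S := by
      intro lam
      have hsum : ∑ x ∈ s', (δ x + lam * c₀ x) = 1 := by
        rw [Finset.sum_add_distrib, hδsum, ← Finset.mul_sum, hc₀sum]
        ring
      have hmem := energy_mem S hS s' (fun x => δ x + lam * c₀ x) hsum
      have hident : ∑ x ∈ s', ∑ y ∈ s', (δ x + lam * c₀ x) * (δ y + lam * c₀ y) * dist x y
          = A + lam * B + lam ^ 2 * Q := by
        have hterm : ∀ x y : X, (δ x + lam * c₀ x) * (δ y + lam * c₀ y) * dist x y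
            = δ x * δ y * dist x y + lam * ((δ x * c₀ y + c₀ x * δ y) * dist x y)
              + lam ^ 2 * (c₀ x * c₀ y * dist x y) := fun x y => by ring
        rw [Finset.sum_congr rfl fun x (_ : x ∈ s') =>
          Finset.sum_congr rfl fun y (_ : y ∈ s') => hterm x y]
        simp only [Finset.sum_add_distrib, ← Finset.mul_sum]
        rw [hQ, hA', hB']
      rwa [hident] at hmem
    by_contra hEc
    push_neg at hEc
    have hQpos : 0 < Q := hEc
    have hA : A ≤ Bd := by
      have h := hBd _ (expand 0)
      simpa using h
    set lam := max 1 ((Bd - A + |B| + 1) / Q) with hlam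
    have hlam1 : (1:ℝ) ≤ lam := le_max_left _ _
    have hlam0 : (0:ℝ) ≤ lam := by linarith
    have hlamQ : Bd - A + |B| + 1 ≤ lam * Q :=
      (div_le_iff₀ hQpos).mp (le_max_right _ _)
    have hle := hBd _ (expand lam)
    have h1 : lam * (Bd - A + |B| + 1) ≤ lam * (lam * Q) :=
      mul_le_mul_of_nonneg_left hlamQ hlam0
    have h2 : lam * (-|B|) ≤ lam * B := mul_le_mul_of_nonneg_left (neg_abs_le B) hlam0
    have h3 : 1 * (Bd - A + 1) ≤ lam * (Bd - A + 1) :=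
      mul_le_mul_of_nonneg_right hlam1 (by linarith)
    nlinarith [h1, h2, h3, hle]
  · have h1 := energy_mem S hS s (fun x => c x / t)
      (by rw [← Finset.sum_div, ← ht, div_self h0])
    have h2 := le_csSup hfin h1
    have h3 : ∑ x ∈ s, ∑ y ∈ s, c x / t * (c y / t) * dist x y
        = (∑ x ∈ s, ∑ y ∈ s, c x * c y * dist x y) / t ^ 2 := by
      rw [Finset.sum_div]
      refine Finset.sum_congr rfl fun x _ => ?_
      rw [Finset.sum_div]
      refine Finset.sum_congr rfl fun y _ => ?_
      show c x / t * (c y / t) * dist x y = c x * c y * dist x y / t ^ 2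
      ring
    rw [h3, div_le_iff₀ (pow_two_pos_of_ne_zero h0)] at h2
    exact h2


end SEmb2

open MeasureTheory

theorem embedding_on_sphere_of_M_finite
    {X : Type*} [MetricSpace X] [CompactSpace X]
    [MeasurableSpace X] [BorelSpace X]
    (S : Set ℝ)
    (hS : S = {r : ℝ | ∃ P N : Measure X, IsFiniteMeasure P ∧ IsFiniteMeasure N ∧
      (P Set.univ).toReal - (N Set.univ).toReal = 1 ∧
      r = (∫ a, ∫ b, dist a b ∂P ∂P) + (∫ a, ∫ b, dist a b ∂N ∂N)
            - 2 * (∫ a, ∫ b, dist a b ∂N ∂P)})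
    (hfin : BddAbove S) :
    ∃ i : X → lp (fun _ : ℕ => ℝ) 2,
      (∀ x : X, ‖i x‖ = Real.sqrt (sSup S / 2)) ∧
      (∀ x y : X, ‖i x - i y‖ ^ 2 = dist x y) := by
  classical
  obtain (he | hne) := isEmpty_or_nonempty X
  · exact ⟨fun _ => 0, fun x => (he.false x).elim, fun x _ => (he.false x).elim⟩
  · set M := sSup S with hM
    have hpsd : ∀ (s : Finset X) (c : X → ℝ),
        0 ≤ ∑ x ∈ s, ∑ y ∈ s, c x * c y * ((M - dist x y) / 2) := by
      intro s c
      have hE := SEmb2.energy_le S hS hfin s c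
      have hsq : (∑ x ∈ s, c x) ^ 2 = ∑ x ∈ s, ∑ y ∈ s, c x * c y := by
        rw [sq, Finset.sum_mul_sum]
      have hexp : ∑ x ∈ s, ∑ y ∈ s, c x * c y * ((M - dist x y) / 2)
          = (M * (∑ x ∈ s, c x) ^ 2 - ∑ x ∈ s, ∑ y ∈ s, c x * c y * dist x y) / 2 := by
        have hterm : ∀ x y : X, c x * c y * ((M - dist x y) / 2)
            = M * (c x * c y) / 2 - c x * c y * dist x y / 2 := fun x y => by ring
        rw [hsq, Finset.mul_sum]
        simp only [Finset.mul_sum]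
        simp only [← Finset.sum_sub_distrib]
        simp only [Finset.sum_div]
        refine Finset.sum_congr rfl fun x _ => Finset.sum_congr rfl fun y _ => ?_
        ring
      rw [hexp]
      linarith [hE]
    obtain ⟨i, h1, h2⟩ := SEmb.exists_embedding (fun x y => (M - dist x y) / 2)
      (fun x y => by show (M - dist x y) / 2 = (M - dist y x) / 2; rw [dist_comm]) hpsd
      (fun x y => by
        show (M - dist x x) / 2 + (M - dist y y) / 2 - 2 * ((M - dist x y) / 2) = dist x y
        rw [dist_self, dist_self]; ring)
    refine ⟨i, fun x => ?_, h2⟩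
    have h3 : ‖i x‖ ^ 2 = M / 2 := by
      rw [h1 x]
      show (M - dist x x) / 2 = M / 2
      rw [dist_self, sub_zero]
    calc ‖i x‖ = Real.sqrt (‖i x‖ ^ 2) := (Real.sqrt_sq (norm_nonneg _)).symm
      _ = Real.sqrt (sSup S / 2) := by rw [h3, hM]
end

section
/- Every metric space with at most 3 points is hypermetric. -/
open Finset

private lemma Lreal (p q r d12 d13 d23 : ℝ) (hp : 0 ≤ p) (hq : 0 ≤ q)
    (h13 : 0 ≤ d13) (h23 : 0 ≤ d23) (ht : d12 ≤ d13 + d23)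
    (hpr : p + r ≤ 0) (hqr : q + r ≤ 0) :
    p*q*d12 + p*r*d13 + q*r*d23 ≤ 0 := by
  nlinarith [mul_nonneg (mul_nonneg hp hq) (sub_nonneg.2 ht),
    mul_nonpos_of_nonneg_of_nonpos (mul_nonneg hp h13) hqr,
    mul_nonpos_of_nonneg_of_nonpos (mul_nonneg hq h23) hpr]

private lemma Lint (p q r : ℤ) (hsum : p + q + r = -1) (d12 d13 d23 : ℝ)
    (h12 : 0 ≤ d12) (h13 : 0 ≤ d13) (h23 : 0 ≤ d23)
    (t1 : d12 ≤ d13 + d23) (t2 : d13 ≤ d12 + d23) (t3 : d23 ≤ d12 + d13) :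
    (p:ℝ)*q*d12 + (p:ℝ)*r*d13 + (q:ℝ)*r*d23 ≤ 0 := by
  have cast_le : ∀ u v : ℤ, u + v ≤ 0 → (u:ℝ) + (v:ℝ) ≤ 0 := by
    intro u v h; exact_mod_cast h
  have cast_nn : ∀ u : ℤ, 0 ≤ u → (0:ℝ) ≤ (u:ℝ) := by intro u h; exact_mod_cast h
  by_cases hp : 0 ≤ p <;> by_cases hq : 0 ≤ q <;> by_cases hr : 0 ≤ r
  · omega
  · -- p,q ≥ 0, r < 0
    have := Lreal p q r d12 d13 d23 (cast_nn _ hp) (cast_nn _ hq) h13 h23 t1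
      (cast_le p r (by omega)) (cast_le q r (by omega))
    linarith
  · -- p,r ≥ 0, q < 0
    have := Lreal p r q d13 d12 d23 (cast_nn _ hp) (cast_nn _ hr) h12 h23 t2
      (cast_le p q (by omega)) (cast_le r q (by omega))
    linarith
  · -- p ≥ 0, q,r < 0 : use -q,-r,-p
    have := Lreal (-(q:ℝ)) (-(r:ℝ)) (-(p:ℝ)) d23 d12 d13
      (by exact_mod_cast (show (0:ℤ) ≤ -q by omega))
      (by exact_mod_cast (show (0:ℤ) ≤ -r by omega))
      h12 h13 t3
      (by exact_mod_cast (show (-q) + (-p) ≤ (0:ℤ) by omega))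
      (by exact_mod_cast (show (-r) + (-p) ≤ (0:ℤ) by omega))
    linarith
  · -- q,r ≥ 0, p < 0
    have := Lreal q r p d23 d12 d13 (cast_nn _ hq) (cast_nn _ hr) h12 h13 t3
      (cast_le q p (by omega)) (cast_le r p (by omega))
    linarith
  · -- q ≥ 0, p,r < 0 : use -p,-r,-q
    have := Lreal (-(p:ℝ)) (-(r:ℝ)) (-(q:ℝ)) d13 d12 d23
      (by exact_mod_cast (show (0:ℤ) ≤ -p by omega))
      (by exact_mod_cast (show (0:ℤ) ≤ -r by omega))
      h12 h23 t2
      (by exact_mod_cast (show (-p) + (-q) ≤ (0:ℤ) by omega))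
      (by exact_mod_cast (show (-r) + (-q) ≤ (0:ℤ) by omega))
    linarith
  · -- r ≥ 0, p,q < 0 : use -p,-q,-r
    have := Lreal (-(p:ℝ)) (-(q:ℝ)) (-(r:ℝ)) d12 d13 d23
      (by exact_mod_cast (show (0:ℤ) ≤ -p by omega))
      (by exact_mod_cast (show (0:ℤ) ≤ -q by omega))
      h13 h23 t1
      (by exact_mod_cast (show (-p) + (-r) ≤ (0:ℤ) by omega))
      (by exact_mod_cast (show (-q) + (-r) ≤ (0:ℤ) by omega))
    linarith
  · -- all < 0 : two are zero, impossible for strict; contradiction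
    omega

theorem three_point_spaces_are_hypermetric
    {X : Type*} [MetricSpace X] [Fintype X] (hcard : Fintype.card X ≤ 3) :
    ∀ (n : ℕ) (a : Fin n → X) (b : Fin (n + 1) → X),
      (∑ i, ∑ j, dist (a i) (a j)) + (∑ i, ∑ j, dist (b i) (b j))
        ≤ 2 * ∑ i, ∑ j, dist (a i) (b j) := by
  intro n a b
  have hx : Nonempty X := ⟨b 0⟩
  obtain ⟨g, hg⟩ : ∃ g : X → Fin 3, Function.Injective g := by
    have h3 : Fintype.card X ≤ Fintype.card (Fin 3) := by simpa using hcard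
    obtain ⟨f⟩ := Function.Embedding.nonempty_of_card_le h3
    exact ⟨f, f.injective⟩
  set h : Fin 3 → X := Function.invFun g with hh
  have hgh : ∀ x, h (g x) = x := fun x => Function.leftInverse_invFun hg x
  set D : Fin 3 → Fin 3 → ℝ := fun k l => dist (h k) (h l) with hD
  have hdist : ∀ x y : X, dist x y = D (g x) (g y) := by
    intro x y; simp [hD, hgh]
  classical
  -- counting lemma
  have key : ∀ (m : ℕ) (v : Fin m → X) (F : Fin 3 → ℝ),
      (∑ i, F (g (v i))) = ∑ k, ((univ.filter fun i => g (v i) = k).card : ℝ) * F k := by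
    intro m v F
    rw [← Finset.sum_fiberwise_of_maps_to (g := fun i => g (v i))
      (fun i (_ : i ∈ univ) => mem_univ (g (v i))) (fun i => F (g (v i)))]
    refine Finset.sum_congr rfl fun k _ => ?_
    rw [Finset.sum_congr rfl (fun i hi => by rw [(mem_filter.mp hi).2]),
      Finset.sum_const, nsmul_eq_mul]
  set cA : Fin 3 → ℕ := fun k => (univ.filter fun i => g (a i) = k).card with hcA
  set cB : Fin 3 → ℕ := fun k => (univ.filter fun i => g (b i) = k).card with hcB
  have sA : ∑ k, cA k = n := by
    have := Finset.card_eq_sum_card_fiberwise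
      (f := fun i => g (a i)) (s := univ) (t := univ) (fun i _ => mem_univ _)
    simpa [hcA] using this.symm
  have sB : ∑ k, cB k = n + 1 := by
    have := Finset.card_eq_sum_card_fiberwise
      (f := fun i => g (b i)) (s := univ) (t := univ) (fun i _ => mem_univ _)
    simpa [hcB] using this.symm
  have e1 : ∑ i, ∑ j, dist (a i) (a j) = ∑ k, ∑ l, (cA k : ℝ) * ((cA l : ℝ) * D k l) := by
    calc ∑ i, ∑ j, dist (a i) (a j)
        = ∑ i, ∑ j, D (g (a i)) (g (a j)) := by simp only [hdist]
      _ = ∑ k, (cA k : ℝ) * ∑ j, D k (g (a j)) :=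
          key n a (fun k => ∑ j, D k (g (a j)))
      _ = ∑ k, (cA k : ℝ) * ∑ l, (cA l : ℝ) * D k l := by
          refine Finset.sum_congr rfl fun k _ => ?_
          rw [key n a (fun l => D k l)]
      _ = _ := by simp only [Finset.mul_sum]
  have e2 : ∑ i, ∑ j, dist (b i) (b j) = ∑ k, ∑ l, (cB k : ℝ) * ((cB l : ℝ) * D k l) := by
    calc ∑ i, ∑ j, dist (b i) (b j)
        = ∑ i, ∑ j, D (g (b i)) (g (b j)) := by simp only [hdist]
      _ = ∑ k, (cB k : ℝ) * ∑ j, D k (g (b j)) :=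
          key (n+1) b (fun k => ∑ j, D k (g (b j)))
      _ = ∑ k, (cB k : ℝ) * ∑ l, (cB l : ℝ) * D k l := by
          refine Finset.sum_congr rfl fun k _ => ?_
          rw [key (n+1) b (fun l => D k l)]
      _ = _ := by simp only [Finset.mul_sum]
  have e3 : ∑ i, ∑ j, dist (a i) (b j) = ∑ k, ∑ l, (cA k : ℝ) * ((cB l : ℝ) * D k l) := by
    calc ∑ i, ∑ j, dist (a i) (b j)
        = ∑ i, ∑ j, D (g (a i)) (g (b j)) := by simp only [hdist]
      _ = ∑ k, (cA k : ℝ) * ∑ j, D k (g (b j)) :=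
          key n a (fun k => ∑ j, D k (g (b j)))
      _ = ∑ k, (cA k : ℝ) * ∑ l, (cB l : ℝ) * D k l := by
          refine Finset.sum_congr rfl fun k _ => ?_
          rw [key (n+1) b (fun l => D k l)]
      _ = _ := by simp only [Finset.mul_sum]
  rw [e1, e2, e3]
  -- facts about D
  have D00 : D 0 0 = 0 := dist_self _
  have D11 : D 1 1 = 0 := dist_self _
  have D22 : D 2 2 = 0 := dist_self _
  have D10 : D 1 0 = D 0 1 := dist_comm _ _
  have D20 : D 2 0 = D 0 2 := dist_comm _ _
  have D21 : D 2 1 = D 1 2 := dist_comm _ _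
  have Dnn : ∀ k l, 0 ≤ D k l := fun k l => dist_nonneg
  have T : ∀ k l m, D k l ≤ D k m + D m l := fun _ _ _ => dist_triangle _ _ _
  have hsum : ((cA 0 : ℤ) - cB 0) + ((cA 1 : ℤ) - cB 1) + ((cA 2 : ℤ) - cB 2) = -1 := by
    have h1 : cA 0 + cA 1 + cA 2 = n := by
      have := sA; rwa [Fin.sum_univ_three] at this
    have h2 : cB 0 + cB 1 + cB 2 = n + 1 := by
      have := sB; rwa [Fin.sum_univ_three] at this
    omega
  have key2 := Lint ((cA 0 : ℤ) - cB 0) ((cA 1 : ℤ) - cB 1) ((cA 2 : ℤ) - cB 2) hsum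
    (D 0 1) (D 0 2) (D 1 2) (Dnn 0 1) (Dnn 0 2) (Dnn 1 2)
    (by have := T 0 1 2; linarith [D21]) (by have := T 0 2 1; linarith [D21])
    (by have := T 1 2 0; linarith [D10, D20])
  push_cast at key2
  simp only [Fin.sum_univ_three, D00, D11, D22, D10, D20, D21]
  nlinarith [key2]
end

section
/- Let X = {x₁,…,xₙ} (n ≥ 2) be a finite quasihypermetric space with distance matrix D = (d(xᵢ,xⱼ)). Suppose w ∈ ℝⁿ solves Dw = 𝟏 and w₀ := Σᵢ wᵢ ≠ 0. Then M(X) = 1/w₀; that is, Σᵢⱼ αᵢαⱼ d(xᵢ,xⱼ) ≤ 1/w₀ for all real α with Σαᵢ = 1, with equality at α = w/w₀. -/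
theorem finite_qhm_M_eq_inv_w0
    {X : Type*} [MetricSpace X] [Fintype X] (hcard : 2 ≤ Fintype.card X)
    (hqhm : ∀ β : X → ℝ, (∑ a, β a) = 0 →
      ∑ a, ∑ b, β a * β b * dist a b ≤ 0)
    (w : X → ℝ) (hw : ∀ a : X, ∑ b, dist a b * w b = 1)
    (w₀ : ℝ) (hw₀ : w₀ = ∑ a, w a) (hne : w₀ ≠ 0) :
    (∀ α : X → ℝ, (∑ a, α a) = 1 →
        ∑ a, ∑ b, α a * α b * dist a b ≤ 1 / w₀) ∧
    (∑ a, ∑ b, (w a / w₀) * (w b / w₀) * dist a b) = 1 / w₀ := by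
  -- cross term: for any α with sum 1
  have cross : ∀ α : X → ℝ, (∑ a, α a) = 1 →
      (∑ a, ∑ b, α a * (w b / w₀) * dist a b) = 1 / w₀ := by
    intro α hα
    have : ∀ a : X, (∑ b, α a * (w b / w₀) * dist a b) = α a / w₀ := by
      intro a
      have : (∑ b, α a * (w b / w₀) * dist a b)
          = (α a / w₀) * ∑ b, dist a b * w b := by
        rw [Finset.mul_sum]; apply Finset.sum_congr rfl; intro b _; ring
      rw [this, hw a]; ring
    rw [Finset.sum_congr rfl (fun a _ => this a), ← Finset.sum_div, hα]
  have cross' : ∀ α : X → ℝ, (∑ a, α a) = 1 →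
      (∑ a, ∑ b, (w a / w₀) * α b * dist a b) = 1 / w₀ := by
    intro α hα
    rw [Finset.sum_comm]
    have := cross α hα
    rw [← this]
    apply Finset.sum_congr rfl; intro b _
    apply Finset.sum_congr rfl; intro a _
    rw [dist_comm]; ring
  have hwsum : (∑ a, w a / w₀) = 1 := by
    rw [← Finset.sum_div, ← hw₀, div_self hne]
  have heq : (∑ a, ∑ b, (w a / w₀) * (w b / w₀) * dist a b) = 1 / w₀ :=
    cross (fun a => w a / w₀) hwsum
  refine ⟨?_, heq⟩
  intro α hα
  have hβ : (∑ a, (α a - w a / w₀)) = 0 := by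
    rw [Finset.sum_sub_distrib, hα, hwsum]; ring
  have key := hqhm (fun a => α a - w a / w₀) hβ
  have expand : (∑ a, ∑ b, (α a - w a / w₀) * (α b - w b / w₀) * dist a b)
      = (∑ a, ∑ b, α a * α b * dist a b) - 1 / w₀ := by
    have : ∀ a b : X, (α a - w a / w₀) * (α b - w b / w₀) * dist a b
        = α a * α b * dist a b - α a * (w b / w₀) * dist a b
          - (w a / w₀) * α b * dist a b + (w a / w₀) * (w b / w₀) * dist a b := by
      intro a b; ring
    calc (∑ a, ∑ b, (α a - w a / w₀) * (α b - w b / w₀) * dist a b)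
        = (∑ a, ∑ b, α a * α b * dist a b)
          - (∑ a, ∑ b, α a * (w b / w₀) * dist a b)
          - (∑ a, ∑ b, (w a / w₀) * α b * dist a b)
          + (∑ a, ∑ b, (w a / w₀) * (w b / w₀) * dist a b) := by
          simp only [this, Finset.sum_add_distrib, Finset.sum_sub_distrib]
      _ = (∑ a, ∑ b, α a * α b * dist a b) - 1 / w₀ := by
          rw [cross α hα, cross' α hα, heq]; ring
  rw [expand] at key
  linarith
end

section
/- Let X = {x₁,…,xₙ} (n ≥ 2) be a finite quasihypermetric space with distance matrix D. If there exists w ∈ ℝⁿ with Dw = 𝟏 and Σᵢ wᵢ = 0, then M(X) = ∞: the quadratic form Σᵢⱼ αᵢαⱼ d(xᵢ,xⱼ) is unbounded above over vectors α with Σαᵢ = 1. -/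
theorem finite_qhm_M_infinite_of_mass_zero_solution
    {X : Type*} [MetricSpace X] [Fintype X] (hcard : 2 ≤ Fintype.card X)
    (hqhm : ∀ β : X → ℝ, (∑ a, β a) = 0 →
      ∑ a, ∑ b, β a * β b * dist a b ≤ 0)
    (w : X → ℝ) (hw : ∀ a : X, ∑ b, dist a b * w b = 1)
    (hmass : (∑ a, w a) = 0) :
    ¬ BddAbove {s : ℝ | ∃ α : X → ℝ, (∑ a, α a) = 1 ∧
        s = ∑ a, ∑ b, α a * α b * dist a b} := by
  intro hB
  obtain ⟨M, hM⟩ := hB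
  have hn0 : (Fintype.card X : ℝ) ≠ 0 := by
    have : 0 < Fintype.card X := lt_of_lt_of_le (by norm_num) hcard
    exact_mod_cast this.ne'
  set μ : X → ℝ := fun _ => (Fintype.card X : ℝ)⁻¹ with hμdef
  have hμ : ∑ a, μ a = 1 := by
    simp [hμdef, Finset.sum_const, mul_inv_cancel₀ hn0]
  set C : ℝ := ∑ a, ∑ b, μ a * μ b * dist a b with hC
  have h1 : ∀ a : X, ∑ b, μ a * w b * dist a b = μ a := by
    intro a
    calc ∑ b, μ a * w b * dist a b = μ a * ∑ b, dist a b * w b := by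
          rw [Finset.mul_sum]; exact Finset.sum_congr rfl fun b _ => by ring
      _ = μ a := by rw [hw a, mul_one]
  have h2 : ∀ b : X, ∑ a, w a * μ b * dist a b = μ b := by
    intro b
    calc ∑ a, w a * μ b * dist a b = μ b * ∑ a, dist b a * w a := by
          rw [Finset.mul_sum]
          exact Finset.sum_congr rfl fun a _ => by rw [dist_comm]; ring
      _ = μ b := by rw [hw b, mul_one]
  have h3 : ∀ a : X, ∑ b, w a * w b * dist a b = w a := by
    intro a
    calc ∑ b, w a * w b * dist a b = w a * ∑ b, dist a b * w b := by
          rw [Finset.mul_sum]; exact Finset.sum_congr rfl fun b _ => by ring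
      _ = w a := by rw [hw a, mul_one]
  have expand : ∀ t : ℝ,
      ∑ a, ∑ b, (μ a + t * w a) * (μ b + t * w b) * dist a b = C + 2 * t := by
    intro t
    have hsplit : ∀ a b : X, (μ a + t * w a) * (μ b + t * w b) * dist a b
        = μ a * μ b * dist a b + t * (μ a * w b * dist a b)
          + t * (w a * μ b * dist a b) + t ^ 2 * (w a * w b * dist a b) :=
      fun a b => by ring
    simp_rw [hsplit, Finset.sum_add_distrib, ← Finset.mul_sum]
    have e1 : ∑ a : X, ∑ b : X, μ a * w b * dist a b = 1 := by
      rw [Finset.sum_congr rfl fun a _ => h1 a, hμ]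
    have e2 : ∑ a : X, ∑ b : X, w a * μ b * dist a b = 1 := by
      rw [Finset.sum_comm, Finset.sum_congr rfl fun b _ => h2 b, hμ]
    have e3 : ∑ a : X, ∑ b : X, w a * w b * dist a b = 0 := by
      rw [Finset.sum_congr rfl fun a _ => h3 a, hmass]
    rw [e1, e2, e3, ← hC]; ring
  have key : ∀ t : ℝ, C + 2 * t ≤ M := by
    intro t
    refine hM ⟨fun a => μ a + t * w a, ?_, (expand t).symm⟩
    rw [Finset.sum_add_distrib, ← Finset.mul_sum, hμ, hmass]; ring
  have := key ((M - C) / 2 + 1)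
  linarith
end
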